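/- Let $\kappa$ be a seminorm on $E$, $n \in \mathbb{N}$, and let $\mu, \nu$ be finite complex Borel measures with finite $\kappa$-moments up to order $n$, i.e. $\int_E \kappa(f)^m\, d|\mu|(f) < \infty$ for all $0 \le m \le n$ (similarly for $\nu$). Then for every $\hbar \in \mathbb{R}$ the twisted convolution $\mu \star_\hbar \nu$ also has finite $\kappa$-moments up to order $n$, and $\|(\mu \star_\hbar \nu)^m_\kappa\|_1 \le \sum_{k=0}^m \binom{m}{k} \|\mu_\kappa^{m-k}\|_1 \|\nu_\kappa^k\|_1$ for $m \le n$, where $d\mu_\kappa^m(f) := \kappa(f)^m\, d\mu(f)$. -/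

import Mathlib

open MeasureTheory Complex Filter

/-- A finite complex Borel measure, represented by its variation measure
together with a density of modulus one (polar decomposition). -/
structure CMeasure (E : Type*) [MeasurableSpace E] where
  var : MeasureTheory.Measure E
  finite : MeasureTheory.IsFiniteMeasure var
  density : E → ℂ
  meas_density : Measurable density
  norm_density : ∀ f, ‖density f‖ = 1

namespace CMeasure

/-- The value `μ(Λ)` of the complex measure on a set `Λ`. -/
noncomputable def val {E : Type*} [MeasurableSpace E] (μ : CMeasure E) (Λ : Set E) : ℂ :=
  ∫ f in Λ, μ.density f ∂μ.var

/-- The integral `∫ a dμ` of a complex function against the complex measure. -/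
noncomputable def integral {E : Type*} [MeasurableSpace E] (μ : CMeasure E) (a : E → ℂ) : ℂ :=
  ∫ f, a f * μ.density f ∂μ.var

/-- The total variation norm `‖μ‖₁ = |μ|(E)`. -/
noncomputable def norm1 {E : Type*} [MeasurableSpace E] (μ : CMeasure E) : ℝ :=
  (μ.var Set.univ).toReal

end CMeasure

/-- The set of partial sums `∑ ‖φ(Λ_k)‖` over finite disjoint families of
measurable sets, whose supremum is the total variation norm of the set function `φ`. -/
def tvSet {E : Type*} [MeasurableSpace E] (φ : Set E → ℂ) : Set ℝ :=
  { r | ∃ (n : ℕ) (Λ : Fin n → Set E), (∀ i, MeasurableSet (Λ i)) ∧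
      Pairwise (Function.onFun Disjoint Λ) ∧ r = ∑ i, ‖φ (Λ i)‖ }

/-- The total variation norm of a complex set function. -/
noncomputable def tvNorm {E : Type*} [MeasurableSpace E] (φ : Set E → ℂ) : ℝ :=
  sSup (tvSet φ)

/-- Complex-valued indicator function of a set. -/
noncomputable def cind {E : Type*} (Λ : Set E) (h : E) : ℂ :=
  Set.indicator Λ (fun _ => (1 : ℂ)) h

/-- Twisted convolution `(μ ⋆_hb ν)(Λ) = ∫∫ e^{-(i/2)hbσ(f,g)} 1_Λ(f+g) dμ(f) dν(g)`,
as a set function. -/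
noncomputable def twistVal {E : Type*} [MeasurableSpace E] [Add E]
    (σ : E → E → ℝ) (hb : ℝ) (μ ν : CMeasure E) (Λ : Set E) : ℂ :=
  μ.integral fun f => ν.integral fun g =>
    Complex.exp (-(Complex.I / 2) * (hb : ℂ) * (σ f g : ℂ)) * cind Λ (f + g)

/-- Poisson bracket `{μ,ν}₀(Λ) = ∫∫ σ(f,g) 1_Λ(f+g) dμ(f) dν(g)`, as a set function. -/
noncomputable def pbVal {E : Type*} [MeasurableSpace E] [Add E]
    (σ : E → E → ℝ) (μ ν : CMeasure E) (Λ : Set E) : ℂ :=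
  μ.integral fun f => ν.integral fun g => ((σ f g : ℝ) : ℂ) * cind Λ (f + g)

/-- The `m`-th κ-moment of the twisted convolution, as a set function:
`(μ ⋆_ħ ν)^m_κ(Λ) = ∫∫ e^{-(i/2)ħσ(f,g)} κ(f+g)^m 1_Λ(f+g) dμ(f) dν(g)`. -/
noncomputable def twistMomentVal {E : Type*} [AddCommGroup E] [Module ℝ E] [MeasurableSpace E]
    (σ : E → E → ℝ) (hb : ℝ) (κ : Seminorm ℝ E) (m : ℕ)
    (μ ν : CMeasure E) (Λ : Set E) : ℂ :=
  μ.integral fun f => ν.integral fun g =>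
    Complex.exp (-(Complex.I / 2) * (hb : ℂ) * (σ f g : ℂ))
      * ((κ (f + g) ^ m : ℝ) : ℂ) * cind Λ (f + g)

/-- if `μ, ν` have finite κ-moments up to order `n`, then so does the
twisted convolution `μ ⋆_ħ ν`, with
`‖(μ⋆_ħν)^m_κ‖₁ ≤ ∑_{k=0}^m (m choose k) ‖μ^{m-k}_κ‖₁ ‖ν^k_κ‖₁` for `m ≤ n`. -/
theorem twisted_convolution_moments
    {E : Type*} [AddCommGroup E] [Module ℝ E] [MeasurableSpace E] [MeasurableAdd₂ E]
    (σ : E →ₗ[ℝ] E →ₗ[ℝ] ℝ) (hσ_anti : ∀ f g : E, σ f g = - σ g f)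
    (hσ_meas : Measurable fun p : E × E => σ p.1 p.2)
    (κ : Seminorm ℝ E) (hκ_meas : Measurable fun f : E => (κ f : ℝ))
    (n : ℕ) (hb : ℝ) (μ ν : CMeasure E)
    (hμ : ∀ m ≤ n, MeasureTheory.Integrable (fun f : E => (κ f : ℝ) ^ m) μ.var)
    (hν : ∀ m ≤ n, MeasureTheory.Integrable (fun g : E => (κ g : ℝ) ^ m) ν.var) :
    ∀ m ≤ n,
      BddAbove (tvSet (twistMomentVal (fun a b => σ a b) hb κ m μ ν)) ∧
      tvNorm (twistMomentVal (fun a b => σ a b) hb κ m μ ν)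
        ≤ ∑ k ∈ Finset.range (m + 1),
            (m.choose k : ℝ) * (∫ f, (κ f : ℝ) ^ (m - k) ∂μ.var)
              * (∫ g, (κ g : ℝ) ^ k ∂ν.var) := by
  intro m hm
  haveI := μ.finite
  haveI := ν.finite
  have hκnn : ∀ x : E, 0 ≤ κ x := fun x => apply_nonneg κ x
  have hμnn : ∀ j : ℕ, 0 ≤ ∫ f, (κ f : ℝ) ^ j ∂μ.var :=
    fun j => integral_nonneg fun x => pow_nonneg (hκnn x) j
  have hνnn : ∀ j : ℕ, 0 ≤ ∫ g, (κ g : ℝ) ^ j ∂ν.var :=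
    fun j => integral_nonneg fun x => pow_nonneg (hκnn x) j
  set B : ℝ := ∑ k ∈ Finset.range (m + 1),
      (m.choose k : ℝ) * (∫ f, (κ f : ℝ) ^ (m - k) ∂μ.var) * (∫ g, (κ g : ℝ) ^ k ∂ν.var)
    with hBdef
  have hBnn : 0 ≤ B :=
    Finset.sum_nonneg fun k _ =>
      mul_nonneg (mul_nonneg (Nat.cast_nonneg _) (hμnn _)) (hνnn _)
  -- Claim A : pointwise bound on the twisted moment by an iterated lintegral
  have claimA : ∀ Λ : Set E,
      ENNReal.ofReal ‖twistMomentVal (fun a b => σ a b) hb κ m μ ν Λ‖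
        ≤ ∫⁻ f, ∫⁻ g, ENNReal.ofReal (κ (f + g) ^ m
            * Set.indicator Λ (fun _ => (1:ℝ)) (f + g)) ∂ν.var ∂μ.var := by
    intro Λ
    have hptnorm : ∀ f g : E,
        ‖(Complex.exp (-(Complex.I / 2) * (hb : ℂ) * ((σ f g : ℝ) : ℂ))
            * ((κ (f + g) ^ m : ℝ) : ℂ) * cind Λ (f + g)) * ν.density g‖
          = κ (f + g) ^ m * Set.indicator Λ (fun _ => (1:ℝ)) (f + g) := by
      intro f g
      rw [norm_mul, ν.norm_density, mul_one, norm_mul, norm_mul]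
      have h1 : ‖Complex.exp (-(Complex.I / 2) * (hb:ℂ) * ((σ f g : ℝ):ℂ))‖ = 1 := by
        rw [Complex.norm_exp]
        simp [Complex.mul_re, Complex.div_re]
      have h2 : ‖((κ (f+g) ^ m : ℝ):ℂ)‖ = κ (f+g) ^ m := by
        rw [Complex.norm_real]; exact _root_.abs_of_nonneg (pow_nonneg (hκnn _) m)
      have h3 : ‖cind Λ (f+g)‖ = Set.indicator Λ (fun _ => (1:ℝ)) (f+g) := by
        unfold cind; by_cases h : (f+g) ∈ Λ <;> simp [h]
      rw [h1, h2, h3, one_mul]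
    have hinner : ∀ f : E, (‖(ν.integral fun g =>
        Complex.exp (-(Complex.I / 2) * (hb : ℂ) * ((σ f g : ℝ) : ℂ))
          * ((κ (f + g) ^ m : ℝ) : ℂ) * cind Λ (f + g))‖₊ : ENNReal)
        ≤ ∫⁻ g, ENNReal.ofReal (κ (f+g)^m
            * Set.indicator Λ (fun _ => (1:ℝ)) (f+g)) ∂ν.var := by
      intro f
      refine le_trans (enorm_integral_le_lintegral_enorm _) (lintegral_mono fun g => ?_)
      rw [← ofReal_norm_eq_enorm, hptnorm f g]
    unfold twistMomentVal CMeasure.integral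
    rw [ofReal_norm_eq_enorm]
    refine le_trans (enorm_integral_le_lintegral_enorm _) (lintegral_mono fun f => ?_)
    rw [← ofReal_norm_eq_enorm, norm_mul, μ.norm_density, mul_one,
      ofReal_norm_eq_enorm]
    exact hinner f
  -- the full-bound lintegral
  have hfull : (∫⁻ f, ∫⁻ g, ENNReal.ofReal (κ (f+g)^m) ∂ν.var ∂μ.var)
      ≤ ENNReal.ofReal B := by
    have hpt2 : ∀ f g : E, ENNReal.ofReal (κ (f+g)^m)
        ≤ ∑ k ∈ Finset.range (m+1),
            ENNReal.ofReal ((m.choose k : ℝ) * κ f ^ (m-k) * κ g ^ k) := by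
      intro f g
      rw [← ENNReal.ofReal_sum_of_nonneg (fun k _ =>
        mul_nonneg (mul_nonneg (Nat.cast_nonneg _) (pow_nonneg (hκnn f) _))
          (pow_nonneg (hκnn g) _))]
      apply ENNReal.ofReal_le_ofReal
      calc κ (f+g)^m ≤ (κ f + κ g)^m :=
            pow_le_pow_left₀ (hκnn _) (map_add_le_add κ f g) m
        _ = ∑ k ∈ Finset.range (m+1), (m.choose k : ℝ) * κ f ^ (m-k) * κ g ^ k := by
            rw [add_comm (κ f), add_pow]
            exact Finset.sum_congr rfl fun k hk => by ring
    have c1 : ∀ f : E, (∫⁻ g, ∑ k ∈ Finset.range (m+1),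
        ENNReal.ofReal ((m.choose k : ℝ) * κ f ^ (m-k) * κ g ^ k) ∂ν.var)
        = ∑ k ∈ Finset.range (m+1),
            ENNReal.ofReal ((m.choose k : ℝ) * κ f ^ (m-k) * (∫ g, (κ g:ℝ) ^ k ∂ν.var)) := by
      intro f
      rw [lintegral_finset_sum _ (fun k _ =>
        ((hκ_meas.pow_const k).const_mul ((m.choose k : ℝ) * κ f ^ (m-k))).ennreal_ofReal)]
      refine Finset.sum_congr rfl fun k hk => ?_
      have hint : Integrable (fun g : E => (m.choose k : ℝ) * κ f ^ (m-k) * (κ g:ℝ) ^ k) ν.var :=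
        (hν k (le_trans (Nat.lt_succ_iff.mp (Finset.mem_range.mp hk)) hm)).const_mul _
      rw [← ofReal_integral_eq_lintegral_ofReal hint (ae_of_all _ fun g =>
        mul_nonneg (mul_nonneg (Nat.cast_nonneg _) (pow_nonneg (hκnn f) _))
          (pow_nonneg (hκnn g) _)), integral_const_mul]
    have c2 : (∫⁻ f, ∑ k ∈ Finset.range (m+1),
        ENNReal.ofReal ((m.choose k : ℝ) * κ f ^ (m-k) * (∫ g, (κ g:ℝ) ^ k ∂ν.var)) ∂μ.var)
        = ∑ k ∈ Finset.range (m+1), ENNReal.ofReal ((m.choose k : ℝ)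
            * (∫ f, (κ f:ℝ) ^ (m-k) ∂μ.var) * (∫ g, (κ g:ℝ) ^ k ∂ν.var)) := by
      rw [lintegral_finset_sum _ (fun k _ =>
        (((hκ_meas.pow_const (m-k)).const_mul (m.choose k : ℝ)).mul_const _).ennreal_ofReal)]
      refine Finset.sum_congr rfl fun k hk => ?_
      have hint : Integrable (fun f : E =>
          (m.choose k : ℝ) * (∫ g, (κ g:ℝ) ^ k ∂ν.var) * (κ f:ℝ) ^ (m-k)) μ.var :=
        (hμ (m-k) (le_trans (Nat.sub_le m k) hm)).const_mul _
      have hre : ∀ f : E, (m.choose k : ℝ) * κ f ^ (m-k) * (∫ g, (κ g:ℝ) ^ k ∂ν.var)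
          = (m.choose k : ℝ) * (∫ g, (κ g:ℝ) ^ k ∂ν.var) * (κ f:ℝ) ^ (m-k) := fun f => by ring
      calc (∫⁻ f, ENNReal.ofReal ((m.choose k : ℝ) * κ f ^ (m-k)
              * (∫ g, (κ g:ℝ) ^ k ∂ν.var)) ∂μ.var)
          = ∫⁻ f, ENNReal.ofReal ((m.choose k : ℝ) * (∫ g, (κ g:ℝ) ^ k ∂ν.var)
              * (κ f:ℝ) ^ (m-k)) ∂μ.var := by
            exact lintegral_congr fun f => by rw [hre f]
        _ = ENNReal.ofReal (∫ f, (m.choose k : ℝ) * (∫ g, (κ g:ℝ) ^ k ∂ν.var)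
              * (κ f:ℝ) ^ (m-k) ∂μ.var) :=
            (ofReal_integral_eq_lintegral_ofReal hint (ae_of_all _ fun f =>
              mul_nonneg (mul_nonneg (Nat.cast_nonneg _) (hνnn k))
                (pow_nonneg (hκnn f) _))).symm
        _ = ENNReal.ofReal ((m.choose k : ℝ) * (∫ f, (κ f:ℝ) ^ (m-k) ∂μ.var)
              * (∫ g, (κ g:ℝ) ^ k ∂ν.var)) := by
            rw [integral_const_mul]; ring_nf
    calc (∫⁻ f, ∫⁻ g, ENNReal.ofReal (κ (f+g)^m) ∂ν.var ∂μ.var)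
        ≤ ∫⁻ f, ∫⁻ g, ∑ k ∈ Finset.range (m+1),
            ENNReal.ofReal ((m.choose k : ℝ) * κ f ^ (m-k) * κ g ^ k) ∂ν.var ∂μ.var :=
          lintegral_mono fun f => lintegral_mono fun g => hpt2 f g
      _ = ∫⁻ f, ∑ k ∈ Finset.range (m+1),
            ENNReal.ofReal ((m.choose k : ℝ) * κ f ^ (m-k)
              * (∫ g, (κ g:ℝ) ^ k ∂ν.var)) ∂μ.var := lintegral_congr c1
      _ = ∑ k ∈ Finset.range (m+1), ENNReal.ofReal ((m.choose k : ℝ)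
            * (∫ f, (κ f:ℝ) ^ (m-k) ∂μ.var) * (∫ g, (κ g:ℝ) ^ k ∂ν.var)) := c2
      _ = ENNReal.ofReal B := (ENNReal.ofReal_sum_of_nonneg fun k _ =>
            mul_nonneg (mul_nonneg (Nat.cast_nonneg _) (hμnn _)) (hνnn _)).symm
  -- key bound on elements of the tvSet
  have key : ∀ r ∈ tvSet (twistMomentVal (fun a b => σ a b) hb κ m μ ν), r ≤ B := by
    rintro r ⟨N, Λ, hΛmeas, hdisj, rfl⟩
    have hmeasT : ∀ i : Fin N, Measurable (fun p : E × E =>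
        ENNReal.ofReal (κ (p.1 + p.2) ^ m
          * Set.indicator (Λ i) (fun _ => (1:ℝ)) (p.1 + p.2))) := fun i =>
      (((hκ_meas.comp measurable_add).pow_const m).mul
        ((Measurable.indicator measurable_const (hΛmeas i)).comp measurable_add)).ennreal_ofReal
    have hswap : ∑ i : Fin N, (∫⁻ f, ∫⁻ g, ENNReal.ofReal (κ (f + g) ^ m
          * Set.indicator (Λ i) (fun _ => (1:ℝ)) (f + g)) ∂ν.var ∂μ.var)
        ≤ ∫⁻ f, ∫⁻ g, ENNReal.ofReal (κ (f+g)^m) ∂ν.var ∂μ.var := by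
      rw [← lintegral_finset_sum _ (fun i _ =>
        Measurable.lintegral_prod_right (f := fun f g => ENNReal.ofReal (κ (f + g) ^ m
          * Set.indicator (Λ i) (fun _ => (1:ℝ)) (f + g))) (hmeasT i))]
      refine lintegral_mono fun f => ?_
      have hadd : Measurable fun g : E => f + g := measurable_const_add f
      rw [← lintegral_finset_sum _ (fun i _ => show Measurable fun g : E =>
        ENNReal.ofReal (κ (f + g) ^ m * Set.indicator (Λ i) (fun _ => (1:ℝ)) (f + g)) from
        (((hκ_meas.comp hadd).pow_const m).mul
          ((Measurable.indicator measurable_const (hΛmeas i)).comp hadd)).ennreal_ofReal)]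
      refine lintegral_mono fun g => ?_
      by_cases h : ∃ j, f + g ∈ Λ j
      · obtain ⟨j, hj⟩ := h
        have hsum : ∑ i : Fin N, ENNReal.ofReal (κ (f + g) ^ m
            * Set.indicator (Λ i) (fun _ => (1:ℝ)) (f + g))
            = ENNReal.ofReal (κ (f + g) ^ m
                * Set.indicator (Λ j) (fun _ => (1:ℝ)) (f + g)) := by
          refine Finset.sum_eq_single j (fun i _ hij => ?_) (by simp)
          have hni : f + g ∉ Λ i :=
            fun hmem => (Set.disjoint_left.mp (hdisj hij) hmem) hj
          rw [Set.indicator_of_notMem hni, mul_zero, ENNReal.ofReal_zero]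
        rw [hsum, Set.indicator_of_mem hj, mul_one]
      · push_neg at h
        have hz : ∀ i ∈ Finset.univ, ENNReal.ofReal (κ (f + g) ^ m
            * Set.indicator (Λ i) (fun _ => (1:ℝ)) (f + g)) = 0 := fun i _ => by
          rw [Set.indicator_of_notMem (h i), mul_zero, ENNReal.ofReal_zero]
        rw [Finset.sum_congr rfl hz, Finset.sum_const_zero]
        exact zero_le
    have h1 : ENNReal.ofReal (∑ i, ‖twistMomentVal (fun a b => σ a b) hb κ m μ ν (Λ i)‖)
        ≤ ENNReal.ofReal B := by
      rw [ENNReal.ofReal_sum_of_nonneg (fun i _ => norm_nonneg _)]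
      exact le_trans (Finset.sum_le_sum fun i _ => claimA (Λ i)) (le_trans hswap hfull)
    exact (ENNReal.ofReal_le_ofReal_iff hBnn).mp h1
  exact ⟨⟨B, fun r hr => key r hr⟩, Real.sSup_le key hBnn⟩
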